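/- For every complex number a with Im(a) < 0 and every real x > 0, ∫_{-∞}^{∞} e^{-x s²}/(s - a) ds = -iπ·e^{-x a²}·erfc(i·√x·a). -/

import Mathlib

open Complex MeasureTheory

open Set Filter Topology

/-- derivative of `w ↦ w * exp(-(c*w)^2)` -/
lemma hasDerivAt_aux (c w : ℂ) :
    HasDerivAt (fun w => w * Complex.exp (-(c * w) ^ 2))
      ((1 - 2 * c ^ 2 * w ^ 2) * Complex.exp (-(c * w) ^ 2)) w := by
  have h1 : HasDerivAt (fun w : ℂ => -(c * w) ^ 2) (-(2 * (c * w) * c)) w := by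
    refine (((hasDerivAt_id w).const_mul c).pow 2).neg.congr_deriv ?_
    simp
  have h2 := h1.cexp
  have h3 := (hasDerivAt_id w).mul h2
  refine h3.congr_deriv ?_
  simp only [id_eq]
  ring

/-- The segment integral `∫_0^z e^{-w²} dw`. -/
noncomputable def segInt (z : ℂ) : ℂ :=
  ∫ t in (0 : ℝ)..1, z * Complex.exp (-((t : ℂ) * z) ^ 2)

lemma hasDerivAt_segInt (z : ℂ) :
    HasDerivAt segInt (Complex.exp (-z ^ 2)) z := by
  have key : HasDerivAt (fun z => ∫ t in (0:ℝ)..1, z * Complex.exp (-((t:ℂ) * z) ^ 2))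
      (∫ t in (0:ℝ)..1, (1 - 2 * (t:ℂ) ^ 2 * z ^ 2) * Complex.exp (-((t:ℂ) * z) ^ 2)) z := by
    have cont : ∀ w : ℂ, Continuous fun t : ℝ => w * Complex.exp (-((t:ℂ) * w) ^ 2) := by
      intro w; fun_prop
    have cont' : Continuous fun t : ℝ => (1 - 2 * (t:ℂ) ^ 2 * z ^ 2) *
        Complex.exp (-((t:ℂ) * z) ^ 2) := by fun_prop
    refine (intervalIntegral.hasDerivAt_integral_of_dominated_loc_of_deriv_le
      (F := fun w t => w * Complex.exp (-((t:ℂ) * w) ^ 2))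
      (F' := fun w t => (1 - 2 * (t:ℂ) ^ 2 * w ^ 2) * Complex.exp (-((t:ℂ) * w) ^ 2))
      (bound := fun _ => (1 + 2 * (‖z‖ + 1) ^ 2) * Real.exp ((‖z‖ + 1) ^ 2))
      (Metric.ball_mem_nhds z one_pos) (Filter.Eventually.of_forall fun w => (cont w).aestronglyMeasurable)
      ((cont z).intervalIntegrable _ _) cont'.aestronglyMeasurable ?_
      (intervalIntegrable_const) ?_).2
    · refine Filter.Eventually.of_forall fun t ht w hw => ?_
      have ht' : t ∈ Set.Ioc (0:ℝ) 1 := by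
        simpa [Set.uIoc_of_le (zero_le_one (α := ℝ))] using ht
      have hwn : ‖w‖ ≤ ‖z‖ + 1 := by
        have := mem_ball_iff_norm.mp hw
        calc ‖w‖ ≤ ‖w - z‖ + ‖z‖ := by simpa using norm_add_le (w - z) z
        _ ≤ ‖z‖ + 1 := by linarith
      have htn : |t| ≤ 1 := by rw [abs_of_pos ht'.1]; exact ht'.2
      have h0 : (0:ℝ) ≤ ‖z‖ + 1 := by positivity
      have htw : ‖(t:ℂ) * w‖ ≤ ‖z‖ + 1 := by
        rw [norm_mul, Complex.norm_real, Real.norm_eq_abs]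
        calc |t| * ‖w‖ ≤ 1 * (‖z‖ + 1) := by
              apply mul_le_mul htn hwn (norm_nonneg _) zero_le_one
        _ = ‖z‖ + 1 := one_mul _
      rw [norm_mul, Complex.norm_exp]
      have hre : (-((t:ℂ) * w) ^ 2).re ≤ (‖z‖ + 1) ^ 2 := by
        calc (-((t:ℂ) * w) ^ 2).re ≤ ‖(-((t:ℂ) * w) ^ 2)‖ := Complex.re_le_norm _
        _ = ‖(t:ℂ) * w‖ ^ 2 := by rw [norm_neg, norm_pow]
        _ ≤ (‖z‖ + 1) ^ 2 := by gcongr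
      have h1 : ‖1 - 2 * (t:ℂ) ^ 2 * w ^ 2‖ ≤ 1 + 2 * (‖z‖ + 1) ^ 2 := by
        calc ‖1 - 2 * (t:ℂ) ^ 2 * w ^ 2‖ ≤ ‖(1:ℂ)‖ + ‖2 * (t:ℂ) ^ 2 * w ^ 2‖ :=
              norm_sub_le _ _
        _ = 1 + 2 * ‖(t:ℂ) * w‖ ^ 2 := by
              simp [norm_mul, mul_pow]; ring
        _ ≤ 1 + 2 * (‖z‖ + 1) ^ 2 := by gcongr
      exact mul_le_mul h1 (Real.exp_le_exp.mpr hre) (Real.exp_nonneg _)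
        (by positivity)
    · refine Filter.Eventually.of_forall fun t _ w _ => ?_
      have := hasDerivAt_aux (t:ℂ) w
      simpa [mul_comm] using this
  have heq : (∫ t in (0:ℝ)..1, (1 - 2 * (t:ℂ) ^ 2 * z ^ 2) * Complex.exp (-((t:ℂ) * z) ^ 2))
      = Complex.exp (-z ^ 2) := by
    have : ∀ t ∈ Set.uIcc (0:ℝ) 1, HasDerivAt (fun t : ℝ => (t:ℂ) * Complex.exp (-((t:ℂ) * z) ^ 2))
        ((1 - 2 * (t:ℂ) ^ 2 * z ^ 2) * Complex.exp (-((t:ℂ) * z) ^ 2)) t := by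
      intro t _
      have h := (hasDerivAt_aux z (t:ℂ)).comp_ofReal
      rw [show (1 - 2 * z ^ 2 * (t:ℂ) ^ 2) = 1 - 2 * (t:ℂ) ^ 2 * z ^ 2 by ring] at h
      simp only [mul_comm z] at h
      exact h
    have h2 := intervalIntegral.integral_eq_sub_of_hasDerivAt this
      (by apply Continuous.intervalIntegrable; fun_prop)
    rw [h2]
    simp
  exact heq ▸ key

lemma segInt_add_ofReal (c : ℂ) (r : ℝ) :
    segInt ((r:ℂ) + c) - segInt c = ∫ u in (0:ℝ)..r, Complex.exp (-((u:ℂ) + c) ^ 2) := by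
  have hd : ∀ u ∈ Set.uIcc (0:ℝ) r, HasDerivAt (fun u : ℝ => segInt ((u:ℂ) + c))
      (Complex.exp (-((u:ℂ) + c) ^ 2)) u := by
    intro u _
    have h1 : HasDerivAt (fun z : ℂ => segInt (z + c))
        (Complex.exp (-((u:ℂ) + c) ^ 2)) ((u:ℂ)) := by
      have := (hasDerivAt_segInt (((u:ℂ)) + c)).comp ((u:ℂ))
        ((hasDerivAt_id ((u:ℂ))).add_const c)
      simpa [Function.comp_def] using this
    exact h1.comp_ofReal
  have h2 := intervalIntegral.integral_eq_sub_of_hasDerivAt hd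
    (by apply Continuous.intervalIntegrable; fun_prop)
  rw [h2]; simp

lemma segInt_sub_ofReal (c : ℂ) (r : ℝ) :
    segInt ((r:ℂ) + c) - segInt (r:ℂ)
      = ∫ s in (0:ℝ)..1, c * Complex.exp (-((r:ℂ) + (s:ℂ) * c) ^ 2) := by
  have hd : ∀ s ∈ Set.uIcc (0:ℝ) 1, HasDerivAt (fun s : ℝ => segInt ((r:ℂ) + (s:ℂ) * c))
      (c * Complex.exp (-((r:ℂ) + (s:ℂ) * c) ^ 2)) s := by
    intro s _
    have h1 : HasDerivAt (fun z : ℂ => segInt ((r:ℂ) + z * c))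
        (Complex.exp (-((r:ℂ) + (s:ℂ) * c) ^ 2) * c) ((s:ℂ)) := by
      have := (hasDerivAt_segInt ((r:ℂ) + (s:ℂ) * c)).comp ((s:ℂ))
        (((hasDerivAt_id ((s:ℂ))).mul_const c).const_add (r:ℂ))
      simpa [Function.comp_def] using this
    have := h1.comp_ofReal
    simpa [mul_comm] using this
  have h2 := intervalIntegral.integral_eq_sub_of_hasDerivAt hd
    (by apply Continuous.intervalIntegrable; fun_prop)
  rw [h2]; simp

lemma integrable_shift_gaussian (c : ℂ) :
    Integrable (fun u : ℝ => Complex.exp (-((u:ℂ) + c) ^ 2)) := by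
  have h := integrable_cexp_quadratic (b := 1) (by simp) (-2 * c) (-c ^ 2)
  have e : ∀ u : ℝ, -(1:ℂ) * (u:ℂ) ^ 2 + (-2 * c) * (u:ℂ) + (-c ^ 2) = -((u:ℂ) + c) ^ 2 :=
    fun u => by ring
  simpa only [e] using h

lemma segInt_zero : segInt 0 = 0 := by simp [segInt]

lemma segInt_ofReal_eq (r : ℝ) : segInt (r:ℂ) = ∫ u in (0:ℝ)..r, Complex.exp (-(u:ℂ) ^ 2) := by
  have := segInt_add_ofReal 0 r
  simpa [segInt_zero] using this

lemma tendsto_segInt_ofReal :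
    Filter.Tendsto (fun r : ℝ => segInt (r:ℂ)) Filter.atTop
      (nhds ((Real.sqrt Real.pi : ℂ) / 2)) := by
  have hint : Integrable (fun u : ℝ => Complex.exp (-(u:ℂ) ^ 2)) := by
    simpa using integrable_shift_gaussian 0
  have h1 : Filter.Tendsto (fun r : ℝ => ∫ u in (0:ℝ)..r, Complex.exp (-(u:ℂ) ^ 2))
      Filter.atTop (nhds (∫ u in Set.Ioi (0:ℝ), Complex.exp (-(u:ℂ) ^ 2))) :=
    intervalIntegral_tendsto_integral_Ioi 0 hint.integrableOn tendsto_id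
  have h2 : (∫ u in Set.Ioi (0:ℝ), Complex.exp (-(u:ℂ) ^ 2)) = (Real.sqrt Real.pi : ℂ) / 2 := by
    have h := integral_gaussian_complex_Ioi (b := 1) (by simp)
    simp only [neg_mul, one_mul, div_one] at h
    rw [h]
    congr 1
    rw [show (1/2 : ℂ) = ((1/2 : ℝ) : ℂ) by norm_num, ← Complex.ofReal_cpow Real.pi_pos.le,
      ← Real.sqrt_eq_rpow]
  rw [← h2]
  simp_rw [segInt_ofReal_eq]
  exact h1

lemma integral_shift_gaussian_Ioi (c : ℂ) (hc : 0 ≤ c.re) :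
    (∫ u in Set.Ioi (0:ℝ), Complex.exp (-((u:ℂ) + c) ^ 2))
      = (Real.sqrt Real.pi : ℂ) / 2 - segInt c := by
  -- limit of segInt (r + c) along r → ∞, via the two identities
  have T1 : Filter.Tendsto (fun r : ℝ => segInt ((r:ℂ) + c)) Filter.atTop
      (nhds (segInt c + ∫ u in Set.Ioi (0:ℝ), Complex.exp (-((u:ℂ) + c) ^ 2))) := by
    have h1 : Filter.Tendsto (fun r : ℝ => ∫ u in (0:ℝ)..r, Complex.exp (-((u:ℂ) + c) ^ 2))
        Filter.atTop (nhds (∫ u in Set.Ioi (0:ℝ), Complex.exp (-((u:ℂ) + c) ^ 2))) :=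
      intervalIntegral_tendsto_integral_Ioi 0 (integrable_shift_gaussian c).integrableOn
        tendsto_id
    have := h1.const_add (segInt c)
    refine this.congr fun r => ?_
    rw [← segInt_add_ofReal]
    ring
  have T3 : Filter.Tendsto (fun r : ℝ => segInt ((r:ℂ) + c) - segInt (r:ℂ)) Filter.atTop
      (nhds 0) := by
    apply squeeze_zero_norm' (a := fun r : ℝ => ‖c‖ * Real.exp (c.im ^ 2 - r ^ 2))
    · filter_upwards [Filter.eventually_ge_atTop (0:ℝ)] with r hr
      rw [segInt_sub_ofReal]
      have hb := intervalIntegral.norm_integral_le_of_norm_le_const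
        (C := ‖c‖ * Real.exp (c.im ^ 2 - r ^ 2))
        (f := fun s : ℝ => c * Complex.exp (-((r:ℂ) + (s:ℂ) * c) ^ 2))
        (a := 0) (b := 1) ?_
      · simpa using hb
      · intro s hs
        have hs' : s ∈ Set.Ioc (0:ℝ) 1 := by
          simpa [Set.uIoc_of_le (zero_le_one (α := ℝ))] using hs
        rw [norm_mul, Complex.norm_exp]
        have hre : (-((r:ℂ) + (s:ℂ) * c) ^ 2).re ≤ c.im ^ 2 - r ^ 2 := by
          have : ((r:ℂ) + (s:ℂ) * c) ^ 2 = ((r:ℂ) + (s:ℂ) * c) * ((r:ℂ) + (s:ℂ) * c) := sq _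
          rw [neg_re, this, Complex.mul_re]
          simp only [Complex.add_re, Complex.add_im, Complex.ofReal_re, Complex.ofReal_im,
            Complex.mul_re, Complex.mul_im, Complex.ofReal_re, Complex.ofReal_im]
          have h1 : 0 ≤ s := hs'.1.le
          have h2 : s ≤ 1 := hs'.2
          have hs2 : s ^ 2 ≤ 1 := by nlinarith
          nlinarith [mul_nonneg (mul_nonneg h1 hc) hr, sq_nonneg (s * c.re),
            mul_nonneg (sub_nonneg.2 hs2) (sq_nonneg c.im)]
        gcongr
    · have hexp : Filter.Tendsto (fun r : ℝ => Real.exp (c.im ^ 2 - r ^ 2)) Filter.atTop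
          (nhds 0) := by
        apply Real.tendsto_exp_atBot.comp
        simp_rw [sub_eq_add_neg]
        apply Filter.tendsto_atBot_add_const_left
        exact Filter.tendsto_neg_atTop_atBot.comp (tendsto_pow_atTop two_ne_zero)
      simpa using hexp.const_mul ‖c‖
  have T2 := tendsto_segInt_ofReal
  have Tsum : Filter.Tendsto (fun r : ℝ => segInt ((r:ℂ) + c)) Filter.atTop
      (nhds ((Real.sqrt Real.pi : ℂ) / 2 + 0)) := by
    have := T2.add T3
    refine this.congr fun r => ?_
    ring
  have key := tendsto_nhds_unique T1 Tsum
  rw [add_zero] at key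
  linear_combination key

lemma integral_cexp_mul_Ioi {c : ℂ} (hc : c.re < 0) :
    (∫ t in Set.Ioi (0:ℝ), Complex.exp (c * (t:ℂ))) = -1 / c := by
  have hc0 : c ≠ 0 := fun h => by simp [h] at hc
  have hderiv : ∀ t ∈ Set.Ici (0:ℝ),
      HasDerivAt (fun t : ℝ => Complex.exp (c * (t:ℂ)) / c) (Complex.exp (c * (t:ℂ))) t := by
    intro t _
    have h1 : HasDerivAt (fun z : ℂ => Complex.exp (c * z) / c)
        (Complex.exp (c * (t:ℂ))) ((t:ℂ)) := by
      have := (((hasDerivAt_id ((t:ℂ))).const_mul c).cexp).div_const c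
      simpa [mul_div_assoc, div_self hc0] using this
    exact h1.comp_ofReal
  have hint : MeasureTheory.IntegrableOn (fun t : ℝ => Complex.exp (c * (t:ℂ)))
      (Set.Ioi (0:ℝ)) := by
    refine (MeasureTheory.Integrable.mono' (exp_neg_integrableOn_Ioi 0 (neg_pos.mpr hc)) ?_ ?_)
    · exact (Complex.continuous_exp.comp (continuous_const.mul Complex.continuous_ofReal)).aestronglyMeasurable
    · filter_upwards with t
      rw [Complex.norm_exp]
      simp [Complex.mul_re, neg_mul]
  have hlim : Filter.Tendsto (fun t : ℝ => Complex.exp (c * (t:ℂ)) / c) Filter.atTop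
      (nhds 0) := by
    apply squeeze_zero_norm' (a := fun t : ℝ => Real.exp (c.re * t) / ‖c‖)
    · filter_upwards with t
      rw [norm_div, Complex.norm_exp]
      simp [Complex.mul_re]
    · rw [show (0:ℝ) = 0 / ‖c‖ by simp]
      apply Filter.Tendsto.div_const
      apply Real.tendsto_exp_atBot.comp
      exact Filter.tendsto_id.const_mul_atTop_of_neg hc
  have := MeasureTheory.integral_Ioi_of_hasDerivAt_of_tendsto' hderiv hint hlim
  rw [this]
  simp [neg_div]

/-- The complementary error function, `erfc z = 1 - (2/√π)∫_0^z e^{-w²} dw`,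
with the path integral from `0` to `z` parametrized along the segment. -/
noncomputable def erfc (z : ℂ) : ℂ :=
  1 - (2 / Real.sqrt Real.pi : ℝ) *
    ∫ t in (0 : ℝ)..1, z * Complex.exp (-((t : ℂ) * z) ^ 2)

/-- For `Im a < 0` and `x > 0`,
`∫_ℝ e^{-x s²}/(s - a) ds = -iπ e^{-x a²} erfc(i√x a)`. -/
theorem integral_gaussian_pole_neg (a : ℂ) (ha : a.im < 0) (x : ℝ) (hx : 0 < x) :
    (∫ s : ℝ, Complex.exp (-(x : ℂ) * (s : ℂ) ^ 2) / ((s : ℂ) - a)) =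
      -Complex.I * Real.pi * Complex.exp (-(x : ℂ) * a ^ 2) *
        erfc (Complex.I * (Real.sqrt x : ℂ) * a) := by
  set c : ℂ := Complex.I * (Real.sqrt x : ℂ) * a with hc_def
  have hsx : (0:ℝ) < Real.sqrt x := Real.sqrt_pos.mpr hx
  have hcre : 0 ≤ c.re := by
    rw [hc_def]
    simp [Complex.mul_re, Complex.mul_im]
    nlinarith
  have hcsq : c ^ 2 = -(x:ℂ) * a ^ 2 := by
    rw [hc_def, show (Complex.I * (Real.sqrt x : ℂ) * a) ^ 2
      = Complex.I ^ 2 * ((Real.sqrt x : ℂ)) ^ 2 * a ^ 2 by ring, Complex.I_sq,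
      ← Complex.ofReal_pow, Real.sq_sqrt hx.le]
    ring
  -- Step 1: pointwise rewrite of 1/(s-a)
  have hpt : ∀ s : ℝ, Complex.exp (-(x:ℂ) * (s:ℂ) ^ 2) / ((s:ℂ) - a)
      = ∫ t in Set.Ioi (0:ℝ),
          -Complex.I * Complex.exp (-(x:ℂ) * (s:ℂ) ^ 2 + Complex.I * ((s:ℂ) - a) * (t:ℂ)) := by
    intro s
    have hsa : (s:ℂ) - a ≠ 0 := by
      intro h
      have := congrArg Complex.im h
      simp at this
      linarith
    have hre : (Complex.I * ((s:ℂ) - a)).re < 0 := by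
      simp [Complex.mul_re]
      linarith
    have e1 : ∀ t : ℝ, -Complex.I * Complex.exp (-(x:ℂ) * (s:ℂ) ^ 2
        + Complex.I * ((s:ℂ) - a) * (t:ℂ))
        = (-Complex.I * Complex.exp (-(x:ℂ) * (s:ℂ) ^ 2))
          * Complex.exp ((Complex.I * ((s:ℂ) - a)) * (t:ℂ)) := by
      intro t
      rw [Complex.exp_add]; ring
    simp_rw [e1]
    rw [MeasureTheory.integral_const_mul, integral_cexp_mul_Ioi hre]
    have hI : Complex.I * ((s:ℂ) - a) ≠ 0 := mul_ne_zero Complex.I_ne_zero hsa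
    field_simp
  -- Step 2: Fubini
  set f : ℝ → ℝ → ℂ := fun s t =>
    -Complex.I * Complex.exp (-(x:ℂ) * (s:ℂ) ^ 2 + Complex.I * ((s:ℂ) - a) * (t:ℂ)) with hf_def
  have hInt : MeasureTheory.Integrable (Function.uncurry f)
      ((MeasureTheory.volume : MeasureTheory.Measure ℝ).prod
        ((MeasureTheory.volume : MeasureTheory.Measure ℝ).restrict (Set.Ioi 0))) := by
    have hmeas : Continuous (Function.uncurry f) := by
      rw [hf_def]; unfold Function.uncurry; fun_prop
    have hg2 : MeasureTheory.Integrable (fun t : ℝ => Real.exp (a.im * t))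
        ((MeasureTheory.volume : MeasureTheory.Measure ℝ).restrict (Set.Ioi 0)) := by
      have := exp_neg_integrableOn_Ioi 0 (neg_pos.mpr ha)
      simpa [MeasureTheory.IntegrableOn] using this
    have hg : MeasureTheory.Integrable
        (fun p : ℝ × ℝ => Real.exp (-x * p.1 ^ 2) * Real.exp (a.im * p.2))
        ((MeasureTheory.volume : MeasureTheory.Measure ℝ).prod
          ((MeasureTheory.volume : MeasureTheory.Measure ℝ).restrict (Set.Ioi 0))) :=
      MeasureTheory.Integrable.mul_prod (integrable_exp_neg_mul_sq hx) hg2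
    refine MeasureTheory.Integrable.mono' hg hmeas.aestronglyMeasurable ?_
    filter_upwards with p
    rw [hf_def]
    show ‖-Complex.I * Complex.exp (-(x:ℂ) * (p.1:ℂ) ^ 2 + Complex.I * ((p.1:ℂ) - a) * (p.2:ℂ))‖
      ≤ _
    rw [norm_mul, norm_neg, Complex.norm_I, one_mul, Complex.norm_exp,
      ← Real.exp_add]
    apply le_of_eq
    congr 1
    simp [Complex.add_re, Complex.mul_re, Complex.mul_im, ← Complex.ofReal_pow]
  have hswap : (∫ s : ℝ, ∫ t in Set.Ioi (0:ℝ), f s t)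
      = ∫ t in Set.Ioi (0:ℝ), ∫ s : ℝ, f s t := MeasureTheory.integral_integral_swap hInt
  -- Step 3: inner Gaussian integral
  have hxre : 0 < ((x:ℂ)).re := by simpa using hx
  have hinner : ∀ t : ℝ, (∫ s : ℝ, f s t)
      = (-Complex.I * ((Real.pi:ℂ) / (x:ℂ)) ^ (1/2 : ℂ))
        * Complex.exp (-(t:ℂ) ^ 2 / (4 * (x:ℂ)) - Complex.I * a * (t:ℂ)) := by
    intro t
    have e : ∀ s : ℝ, f s t
        = (-Complex.I * Complex.exp (-(Complex.I * a * (t:ℂ))))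
          * (Complex.exp (Complex.I * (t:ℂ) * (s:ℂ)) * Complex.exp (-(x:ℂ) * (s:ℂ) ^ 2)) := by
      intro s
      rw [hf_def]
      show -Complex.I * Complex.exp _ = _
      rw [show (-(x:ℂ) * (s:ℂ) ^ 2 + Complex.I * ((s:ℂ) - a) * (t:ℂ))
        = (-(Complex.I * a * (t:ℂ))) + (Complex.I * (t:ℂ) * (s:ℂ) + -(x:ℂ) * (s:ℂ) ^ 2) by ring,
        Complex.exp_add, Complex.exp_add]
      ring
    simp_rw [e]
    rw [MeasureTheory.integral_const_mul, fourierIntegral_gaussian hxre ((t:ℂ))]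
    rw [show -(t:ℂ) ^ 2 / (4 * (x:ℂ)) - Complex.I * a * (t:ℂ)
      = (-(Complex.I * a * (t:ℂ))) + (-(t:ℂ) ^ 2 / (4 * (x:ℂ))) by ring, Complex.exp_add]
    ring
  simp_rw [hpt]
  rw [show (∫ s : ℝ, ∫ t in Set.Ioi (0:ℝ),
      -Complex.I * Complex.exp (-(x:ℂ) * (s:ℂ) ^ 2 + Complex.I * ((s:ℂ) - a) * (t:ℂ)))
      = ∫ s : ℝ, ∫ t in Set.Ioi (0:ℝ), f s t from rfl, hswap]
  simp_rw [hinner]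
  rw [MeasureTheory.integral_const_mul]
  -- Step 5: substitution t = 2√x u
  have h2sx : (0:ℝ) < 2 * Real.sqrt x := by positivity
  have hsub := MeasureTheory.integral_comp_mul_left_Ioi
    (fun u : ℝ => Complex.exp (-(u:ℂ) ^ 2 / (4 * (x:ℂ)) - Complex.I * a * (u:ℂ))) 0 h2sx
  rw [mul_zero] at hsub
  have hsub' : (∫ t in Set.Ioi (0:ℝ),
      Complex.exp (-(t:ℂ) ^ 2 / (4 * (x:ℂ)) - Complex.I * a * (t:ℂ)))
      = (2 * Real.sqrt x) • ∫ u in Set.Ioi (0:ℝ),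
          Complex.exp (-((2 * Real.sqrt x * u : ℝ):ℂ) ^ 2 / (4 * (x:ℂ))
            - Complex.I * a * ((2 * Real.sqrt x * u : ℝ):ℂ)) := by
    rw [hsub, smul_smul, mul_inv_cancel₀ (ne_of_gt h2sx), one_smul]
  rw [hsub']
  have epx : ∀ u : ℝ, Complex.exp (-((2 * Real.sqrt x * u : ℝ):ℂ) ^ 2 / (4 * (x:ℂ))
      - Complex.I * a * ((2 * Real.sqrt x * u : ℝ):ℂ))
      = Complex.exp (c ^ 2) * Complex.exp (-((u:ℂ) + c) ^ 2) := by
    intro u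
    rw [← Complex.exp_add]
    congr 1
    have h1 : ((Real.sqrt x : ℂ)) ^ 2 = (x:ℂ) := by
      rw [← Complex.ofReal_pow, Real.sq_sqrt hx.le]
    have hx0 : (x:ℂ) ≠ 0 := by
      simpa using hx.ne'
    push_cast
    rw [hc_def]
    field_simp
    linear_combination (-4 * (u:ℂ) ^ 2) * h1
  simp_rw [epx]
  rw [MeasureTheory.integral_const_mul, integral_shift_gaussian_Ioi c hcre]
  -- Step 6: final algebra
  have herfc : erfc c = 1 - ((2 / Real.sqrt Real.pi : ℝ) : ℂ) * segInt c := rfl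
  have hK : ((Real.pi:ℂ) / (x:ℂ)) ^ (1/2 : ℂ)
      = (Real.sqrt Real.pi : ℂ) / (Real.sqrt x : ℂ) := by
    rw [show (Real.pi:ℂ) / (x:ℂ) = ((Real.pi / x : ℝ) : ℂ) by push_cast; ring,
      show (1/2 : ℂ) = ((1/2 : ℝ) : ℂ) by norm_num,
      ← Complex.ofReal_cpow (by positivity), ← Real.sqrt_eq_rpow,
      Real.sqrt_div Real.pi_pos.le]
    push_cast
    ring
  rw [hK, hcsq, herfc, Complex.real_smul]
  have hsπ : (Real.sqrt Real.pi : ℂ) ≠ 0 := by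
    simpa using (Real.sqrt_pos.mpr Real.pi_pos).ne'
  have hsx0 : (Real.sqrt x : ℂ) ≠ 0 := by simpa using hsx.ne'
  have hπ2 : (Real.sqrt Real.pi : ℂ) ^ 2 = (Real.pi : ℂ) := by
    rw [← Complex.ofReal_pow, Real.sq_sqrt Real.pi_pos.le]
  push_cast
  field_simp
  linear_combination (2 * segInt c - (Real.sqrt Real.pi : ℂ)) * hπ2
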